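/- arXiv:2506.03315 — 5 statements merged into one kernel-verified Lean document; each statement's English description precedes it below -/
import Mathlib

section
/- Let R = ⟨A, 𝕊, 𝔼⟩ be a restricted choice structure, K ∈ 𝔼, and ∇ a K-minimal linear choice function for R. Then ∇ satisfies (SS3): for all S₁, S₂ ∈ 𝕊, if ∇(S₁) ⊆ S₂ and ∇(S₂) ⊆ S₁, then ∇(S₁) = ∇(S₂). -/
/-- `minOf 𝔼 r S` is the set of `r`-minimal elements among all `E ∈ 𝔼` with `E ⊆ S`. -/
def minOf {A : Type*} (𝔼 : Set (Set A)) (r : Set A → Set A → Prop) (S : Set A) :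
    Set (Set A) :=
  {E | E ∈ 𝔼 ∧ E ⊆ S ∧ ∀ F ∈ 𝔼, F ⊆ S → r F E → r E F}

/-- (SS3): a K-minimal linear choice function satisfies: if `∇(S₁) ⊆ S₂` and
`∇(S₂) ⊆ S₁`, then `∇(S₁) = ∇(S₂)`. -/
theorem linear_choice_SS3 {A : Type*}
    (𝕊 𝔼 : Set (Set A)) (hS : 𝕊.Nonempty) (hE : 𝔼.Nonempty) (hES : 𝔼 ⊆ 𝕊)
    (K : Set A) (hK : K ∈ 𝔼)
    (ll : Set A → Set A → Prop)
    (hrefl : ∀ E ∈ 𝔼, ll E E)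
    (htrans : ∀ E₁ ∈ 𝔼, ∀ E₂ ∈ 𝔼, ∀ E₃ ∈ 𝔼, ll E₁ E₂ → ll E₂ E₃ → ll E₁ E₃)
    (htotal : ∀ E₁ ∈ 𝔼, ∀ E₂ ∈ 𝔼, ll E₁ E₂ ∨ ll E₂ E₁)
    (hanti : ∀ E₁ ∈ 𝔼, ∀ E₂ ∈ 𝔼, ll E₁ E₂ → ll E₂ E₁ → E₁ = E₂)
    (hsmooth : ∀ S ∈ 𝕊, (∃ E ∈ 𝔼, E ⊆ S) → (minOf 𝔼 ll S).Nonempty)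
    (hKmin : {E ∈ 𝔼 | ∀ E' ∈ 𝔼, ll E' E → ll E E'} = {K})
    (nabla : Set A → Set A)
    (hdef : ∀ S ∈ 𝕊,
      (∃ E, minOf 𝔼 ll S = {E} ∧ nabla S = E) ∨
      ((¬ ∃ E, minOf 𝔼 ll S = {E}) ∧ nabla S = K))
    :
    ∀ S₁ ∈ 𝕊, ∀ S₂ ∈ 𝕊, nabla S₁ ⊆ S₂ → nabla S₂ ⊆ S₁ → nabla S₁ = nabla S₂ := by
  -- minOf is subsingleton
  have hsub : ∀ S, ∀ E ∈ minOf 𝔼 ll S, ∀ F ∈ minOf 𝔼 ll S, E = F := by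
    rintro S E ⟨hE1, hE2, hE3⟩ F ⟨hF1, hF2, hF3⟩
    rcases htotal E hE1 F hF1 with h | h
    · exact hanti E hE1 F hF1 h (hF3 E hE1 hE2 h)
    · exact hanti E hE1 F hF1 (hE3 F hF1 hF2 h) h
  have key : ∀ S ∈ 𝕊, (∃ E ∈ 𝔼, E ⊆ S) → ∃ E, minOf 𝔼 ll S = {E} ∧ nabla S = E := by
    intro S hSmem hex
    obtain ⟨E, hEmin⟩ := hsmooth S hSmem hex
    have hsing : minOf 𝔼 ll S = {E} := by
      ext F; constructor
      · intro hF; exact hsub S F hF E hEmin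
      · rintro rfl; exact hEmin
    rcases hdef S hSmem with ⟨E', h1, h2⟩ | ⟨h1, _⟩
    · exact ⟨E', h1, h2⟩
    · exact absurd ⟨E, hsing⟩ h1
  intro S₁ hS₁ S₂ hS₂ h12 h21
  have hn1 : nabla S₁ ∈ 𝔼 ∨ nabla S₁ = K := by
    rcases hdef S₁ hS₁ with ⟨E, h1, h2⟩ | ⟨_, h2⟩
    · left; have : E ∈ minOf 𝔼 ll S₁ := h1 ▸ rfl; rw [h2]; exact this.1
    · right; exact h2
  have hEn1 : nabla S₁ ∈ 𝔼 := by rcases hn1 with h | h; exact h; exact h ▸ hK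
  have hn2 : nabla S₂ ∈ 𝔼 ∨ nabla S₂ = K := by
    rcases hdef S₂ hS₂ with ⟨E, h1, h2⟩ | ⟨_, h2⟩
    · left; have : E ∈ minOf 𝔼 ll S₂ := h1 ▸ rfl; rw [h2]; exact this.1
    · right; exact h2
  have hEn2 : nabla S₂ ∈ 𝔼 := by rcases hn2 with h | h; exact h; exact h ▸ hK
  obtain ⟨E₁, hsing1, heq1⟩ := key S₁ hS₁ ⟨nabla S₂, hEn2, h21⟩
  obtain ⟨E₂, hsing2, heq2⟩ := key S₂ hS₂ ⟨nabla S₁, hEn1, h12⟩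
  have hm1 : E₁ ∈ minOf 𝔼 ll S₁ := hsing1 ▸ rfl
  have hm2 : E₂ ∈ minOf 𝔼 ll S₂ := hsing2 ▸ rfl
  rw [heq1, heq2]
  -- E₁ ⊆ S₂ and E₂ ⊆ S₁
  have hs12 : E₁ ⊆ S₂ := heq1 ▸ h12
  have hs21 : E₂ ⊆ S₁ := heq2 ▸ h21
  have h1 : ll E₁ E₂ := by
    rcases htotal E₁ hm1.1 E₂ hm2.1 with h | h
    · exact h
    · exact hm1.2.2 E₂ hm2.1 hs21 h
  have h2 : ll E₂ E₁ := hm2.2.2 E₁ hm1.1 hs12 h1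
  exact hanti E₁ hm1.1 E₂ hm2.1 h1 h2
end

section
/- Let R = ⟨A, 𝕊, 𝔼⟩ be a restricted choice structure, K ∈ 𝔼, and ∇ a K-minimal linear choice function for R. Then ∇ satisfies (SS4): for all S₁, S₂ ∈ 𝕊, if ∇(S₁) ⊆ S₁ and S₁ ⊆ S₂, then ∇(S₂) ⊆ S₂. -/
/-- (SS4): a K-minimal linear choice function satisfies: if `∇(S₁) ⊆ S₁` and
`S₁ ⊆ S₂`, then `∇(S₂) ⊆ S₂`. -/
theorem linear_choice_SS4 {A : Type*}
    (𝕊 𝔼 : Set (Set A)) (hS : 𝕊.Nonempty) (hE : 𝔼.Nonempty) (hES : 𝔼 ⊆ 𝕊)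
    (K : Set A) (hK : K ∈ 𝔼)
    (ll : Set A → Set A → Prop)
    (hrefl : ∀ E ∈ 𝔼, ll E E)
    (htrans : ∀ E₁ ∈ 𝔼, ∀ E₂ ∈ 𝔼, ∀ E₃ ∈ 𝔼, ll E₁ E₂ → ll E₂ E₃ → ll E₁ E₃)
    (htotal : ∀ E₁ ∈ 𝔼, ∀ E₂ ∈ 𝔼, ll E₁ E₂ ∨ ll E₂ E₁)
    (hanti : ∀ E₁ ∈ 𝔼, ∀ E₂ ∈ 𝔼, ll E₁ E₂ → ll E₂ E₁ → E₁ = E₂)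
    (hsmooth : ∀ S ∈ 𝕊, (∃ E ∈ 𝔼, E ⊆ S) → (minOf 𝔼 ll S).Nonempty)
    (hKmin : {E ∈ 𝔼 | ∀ E' ∈ 𝔼, ll E' E → ll E E'} = {K})
    (nabla : Set A → Set A)
    (hdef : ∀ S ∈ 𝕊,
      (∃ E, minOf 𝔼 ll S = {E} ∧ nabla S = E) ∨
      ((¬ ∃ E, minOf 𝔼 ll S = {E}) ∧ nabla S = K))
    :
    ∀ S₁ ∈ 𝕊, ∀ S₂ ∈ 𝕊, nabla S₁ ⊆ S₁ → S₁ ⊆ S₂ → nabla S₂ ⊆ S₂ := by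
  intro S₁ hS₁ S₂ hS₂ h1 h12
  -- minOf is always a singleton when nonempty
  have hsing : ∀ S, (minOf 𝔼 ll S).Nonempty → ∃ E, minOf 𝔼 ll S = {E} := by
    intro S ⟨E, hEmem⟩
    refine ⟨E, Set.eq_singleton_iff_unique_mem.mpr ⟨hEmem, ?_⟩⟩
    intro F hF
    obtain ⟨hE𝔼, hES', hEmin⟩ := hEmem
    obtain ⟨hF𝔼, hFS', hFmin⟩ := hF
    rcases htotal E hE𝔼 F hF𝔼 with h | h
    · exact hanti F hF𝔼 E hE𝔼 (hFmin E hE𝔼 hES' h) h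
    · exact hanti F hF𝔼 E hE𝔼 h (hEmin F hF𝔼 hFS' h)
  -- from S₁: there exists E ∈ 𝔼 with E ⊆ S₂
  have hex : ∃ E ∈ 𝔼, E ⊆ S₂ := by
    rcases hdef S₁ hS₁ with ⟨E, hEq, hN⟩ | ⟨_, hN⟩
    · have hEmem : E ∈ minOf 𝔼 ll S₁ := hEq ▸ rfl
      exact ⟨E, hEmem.1, fun a ha => h12 (hEmem.2.1 ha)⟩
    · exact ⟨K, hK, fun a ha => h12 (h1 (hN ▸ ha))⟩
  have hne := hsmooth S₂ hS₂ hex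
  rcases hdef S₂ hS₂ with ⟨E, hEq, hN⟩ | ⟨hno, _⟩
  · have hEmem : E ∈ minOf 𝔼 ll S₂ := hEq ▸ rfl
    exact hN ▸ hEmem.2.1
  · exact absurd (hsing S₂ hne) hno
end

section
/- Let R = ⟨A, 𝕊, 𝔼⟩ be a union-closed restricted choice structure, K ∈ 𝔼, and ∇ a K-minimal linear choice function for R. Then ∇ satisfies (SS5): if ∇(S_i ∪ S_{i+1}) = S_i for all 0 ≤ i ≤ n-1 and ∇(S_n ∪ S_0) = S_n with S₀ ≠ S_n, then a contradiction follows; i.e., S₀ ≠ S_n implies ∇(S₀ ∪ S_n) ≠ S_n. -/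
/-- (SS5): for a union-closed restricted choice structure, a K-minimal linear choice
function satisfies: if `∇(S i ∪ S (i+1)) = S i` for all `i < n`, then `S 0 ≠ S n`
implies `∇(S 0 ∪ S n) ≠ S n`. -/
theorem linear_choice_SS5 {A : Type*}
    (𝕊 𝔼 : Set (Set A)) (hS : 𝕊.Nonempty) (hE : 𝔼.Nonempty) (hES : 𝔼 ⊆ 𝕊)
    (K : Set A) (hK : K ∈ 𝔼)
    (ll : Set A → Set A → Prop)
    (hrefl : ∀ E ∈ 𝔼, ll E E)
    (htrans : ∀ E₁ ∈ 𝔼, ∀ E₂ ∈ 𝔼, ∀ E₃ ∈ 𝔼, ll E₁ E₂ → ll E₂ E₃ → ll E₁ E₃)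
    (htotal : ∀ E₁ ∈ 𝔼, ∀ E₂ ∈ 𝔼, ll E₁ E₂ ∨ ll E₂ E₁)
    (hanti : ∀ E₁ ∈ 𝔼, ∀ E₂ ∈ 𝔼, ll E₁ E₂ → ll E₂ E₁ → E₁ = E₂)
    (hsmooth : ∀ S ∈ 𝕊, (∃ E ∈ 𝔼, E ⊆ S) → (minOf 𝔼 ll S).Nonempty)
    (hKmin : {E ∈ 𝔼 | ∀ E' ∈ 𝔼, ll E' E → ll E E'} = {K})
    (nabla : Set A → Set A)
    (hdef : ∀ S ∈ 𝕊,
      (∃ E, minOf 𝔼 ll S = {E} ∧ nabla S = E) ∨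
      ((¬ ∃ E, minOf 𝔼 ll S = {E}) ∧ nabla S = K))
    (hUC : ∀ S₁ ∈ 𝕊, ∀ S₂ ∈ 𝕊, S₁ ∪ S₂ ∈ 𝕊) :
    ∀ (n : ℕ) (S : ℕ → Set A), (∀ i ≤ n, S i ∈ 𝕊) →
      (∀ i < n, nabla (S i ∪ S (i + 1)) = S i) →
      S 0 ≠ S n → nabla (S 0 ∪ S n) ≠ S n := by
  intro n S hSmem hchain hne hcon
  have key : ∀ U V : Set A, U ∈ 𝕊 → V ∈ 𝕊 → nabla (U ∪ V) = U →
      U ∈ 𝔼 ∧ ∀ W ∈ 𝔼, W ⊆ U ∪ V → ll U W := by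
    intro U V hU hV hnab
    have hUV := hUC U hU V hV
    rcases hdef _ hUV with ⟨E, hmin, hEeq⟩ | ⟨_, hEeq⟩
    · have hUE : U = E := hnab ▸ hEeq
      subst hUE
      have hUmem : U ∈ minOf 𝔼 ll (U ∪ V) := by rw [hmin]; rfl
      obtain ⟨h1, h2, h3⟩ := hUmem
      refine ⟨h1, fun W hW hWs => ?_⟩
      rcases htotal U h1 W hW with h | h
      · exact h
      · exact h3 W hW hWs h
    · have hUK : U = K := hnab ▸ hEeq
      subst hUK
      have hKglob : ∀ E' ∈ 𝔼, ll E' U → ll U E' := by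
        have : U ∈ {E ∈ 𝔼 | ∀ E' ∈ 𝔼, ll E' E → ll E E'} := by rw [hKmin]; rfl
        exact this.2
      refine ⟨hK, fun W hW _ => ?_⟩
      rcases htotal U hK W hW with h | h
      · exact h
      · exact hKglob W hW h
  have hfin := key (S n) (S 0) (hSmem n le_rfl) (hSmem 0 (Nat.zero_le n))
      (by rw [Set.union_comm]; exact hcon)
  have hEmem : ∀ i ≤ n, S i ∈ 𝔼 := by
    intro i hi
    rcases lt_or_eq_of_le hi with h | h
    · exact (key (S i) (S (i+1)) (hSmem i hi) (hSmem (i+1) h) (hchain i h)).1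
    · exact h ▸ hfin.1
  have hll : ∀ i < n, ll (S i) (S (i+1)) := by
    intro i hi
    exact (key (S i) (S (i+1)) (hSmem i hi.le) (hSmem (i+1) hi)
      (hchain i hi)).2 (S (i+1)) (hEmem (i+1) hi) (Set.subset_union_right)
  have hch : ∀ i ≤ n, ll (S 0) (S i) := by
    intro i hi
    induction i with
    | zero => exact hrefl _ (hEmem 0 (Nat.zero_le n))
    | succ k ih =>
      have hk : k < n := hi
      exact htrans _ (hEmem 0 (Nat.zero_le n)) _ (hEmem k hk.le) _ (hEmem (k+1) hi)
        (ih hk.le) (hll k hk)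
  have hn0 : ll (S n) (S 0) := hfin.2 (S 0) (hEmem 0 (Nat.zero_le n)) Set.subset_union_right
  exact hne (hanti _ (hEmem 0 (Nat.zero_le n)) _ (hEmem n le_rfl) (hch n le_rfl) hn0)
end

section
/- Let R = ⟨A, 𝕊, 𝔼⟩ be a union-closed restricted choice structure, K ∈ 𝔼, and ∇ a K-minimal linear choice function for R. Then ∇ satisfies (SS6): for all S₁, S₂, S₃ ∈ 𝕊, if ∇(S₁ ∪ S₂) = S₃, then ∇(S₁ ∪ S₃) = S₃. -/
/-- (SS6): for a union-closed restricted choice structure, a K-minimal linear choice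
function satisfies: if `∇(S₁ ∪ S₂) = S₃`, then `∇(S₁ ∪ S₃) = S₃`. -/
theorem linear_choice_SS6 {A : Type*}
    (𝕊 𝔼 : Set (Set A)) (hS : 𝕊.Nonempty) (hE : 𝔼.Nonempty) (hES : 𝔼 ⊆ 𝕊)
    (K : Set A) (hK : K ∈ 𝔼)
    (ll : Set A → Set A → Prop)
    (hrefl : ∀ E ∈ 𝔼, ll E E)
    (htrans : ∀ E₁ ∈ 𝔼, ∀ E₂ ∈ 𝔼, ∀ E₃ ∈ 𝔼, ll E₁ E₂ → ll E₂ E₃ → ll E₁ E₃)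
    (htotal : ∀ E₁ ∈ 𝔼, ∀ E₂ ∈ 𝔼, ll E₁ E₂ ∨ ll E₂ E₁)
    (hanti : ∀ E₁ ∈ 𝔼, ∀ E₂ ∈ 𝔼, ll E₁ E₂ → ll E₂ E₁ → E₁ = E₂)
    (hsmooth : ∀ S ∈ 𝕊, (∃ E ∈ 𝔼, E ⊆ S) → (minOf 𝔼 ll S).Nonempty)
    (hKmin : {E ∈ 𝔼 | ∀ E' ∈ 𝔼, ll E' E → ll E E'} = {K})
    (nabla : Set A → Set A)
    (hdef : ∀ S ∈ 𝕊,
      (∃ E, minOf 𝔼 ll S = {E} ∧ nabla S = E) ∨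
      ((¬ ∃ E, minOf 𝔼 ll S = {E}) ∧ nabla S = K))
    (hUC : ∀ S₁ ∈ 𝕊, ∀ S₂ ∈ 𝕊, S₁ ∪ S₂ ∈ 𝕊) :
    ∀ S₁ ∈ 𝕊, ∀ S₂ ∈ 𝕊, ∀ S₃ ∈ 𝕊,
      nabla (S₁ ∪ S₂) = S₃ → nabla (S₁ ∪ S₃) = S₃ := by
  intro S₁ hS₁ S₂ hS₂ S₃ hS₃ h12
  -- key: show S₃ ∈ 𝔼 and S₃ is a lower bound among F ∈ 𝔼 with F ⊆ S₁ ∪ S₃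
  have key : S₃ ∈ 𝔼 ∧ ∀ F ∈ 𝔼, F ⊆ S₁ ∪ S₃ → ll S₃ F := by
    rcases hdef (S₁ ∪ S₂) (hUC S₁ hS₁ S₂ hS₂) with ⟨E, hmin, hnab⟩ | ⟨_, hnab⟩
    · have hE3 : S₃ = E := h12 ▸ hnab ▸ rfl
      subst hE3
      have hSm : S₃ ∈ minOf 𝔼 ll (S₁ ∪ S₂) := hmin ▸ rfl
      obtain ⟨h3E, h3sub, h3min⟩ := hSm
      refine ⟨h3E, fun F hF hFsub => ?_⟩
      have hFsub2 : F ⊆ S₁ ∪ S₂ := fun a ha => (hFsub ha).elim Or.inl (fun h => h3sub h)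
      rcases htotal S₃ h3E F hF with h | h
      · exact h
      · exact h3min F hF hFsub2 h
    · have hE3 : S₃ = K := h12 ▸ hnab ▸ rfl
      rw [hE3]
      have hKm : K ∈ {E ∈ 𝔼 | ∀ E' ∈ 𝔼, ll E' E → ll E E'} := hKmin ▸ rfl
      refine ⟨hK, fun F hF _ => ?_⟩
      rcases htotal K hK F hF with h | h
      · exact h
      · exact hKm.2 F hF h
  obtain ⟨h3E, h3lb⟩ := key
  have hmin13 : minOf 𝔼 ll (S₁ ∪ S₃) = {S₃} := by
    ext G
    constructor
    · rintro ⟨hGE, hGsub, hGmin⟩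
      have h3sub : S₃ ⊆ S₁ ∪ S₃ := Set.subset_union_right
      have hG3 : ll G S₃ := by
        rcases htotal G hGE S₃ h3E with h | h
        · exact h
        · exact hGmin S₃ h3E h3sub h
      exact hanti G hGE S₃ h3E hG3 (h3lb G hGE hGsub)
    · rintro rfl
      exact ⟨h3E, Set.subset_union_right, fun F hF hFsub _ => h3lb F hF hFsub⟩
  rcases hdef (S₁ ∪ S₃) (hUC S₁ hS₁ S₃ hS₃) with ⟨E, hmin, hnab⟩ | ⟨hne, _⟩
  · have : E = S₃ := by
      have : E ∈ ({S₃} : Set (Set A)) := hmin13 ▸ hmin ▸ rfl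
      exact this
    exact hnab.trans this
  · exact absurd ⟨S₃, hmin13⟩ hne
end

section
/- Let ∇: 𝕊 → 𝔼 satisfy (SS3): ∇(S₁) ⊆ S₂ and ∇(S₂) ⊆ S₁ imply ∇(S₁) = ∇(S₂), and (SS2). Define ⊴ on Image(∇) by E₁ ⊴ E₂ iff E₁ = K or ∃E ∈ 𝕊 with E₁ ∪ E₂ ⊆ E and ∇(E) = E₁. Then ⊴ is antisymmetric: E₁ ⊴ E₂ and E₂ ⊴ E₁ imply E₁ = E₂. -/
/-- If `∇` satisfies (SS3) and (SS2), then the relation `⊴` on `Image(∇)` defined by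
`E₁ ⊴ E₂` iff `E₁ = K` or there exists `E ∈ 𝕊` with `E₁ ∪ E₂ ⊆ E` and `∇(E) = E₁`
is antisymmetric. -/
theorem encoded_relation_antisymmetric {A : Type*}
    (𝕊 𝔼 : Set (Set A)) (hS : 𝕊.Nonempty) (hE : 𝔼.Nonempty) (hES : 𝔼 ⊆ 𝕊)
    (K : Set A) (hK : K ∈ 𝔼)
    (nabla : Set A → Set A)
    (hSS2 : ∀ S ∈ 𝕊, K ⊆ S → nabla S = K)
    (hSS3 : ∀ S₁ ∈ 𝕊, ∀ S₂ ∈ 𝕊, nabla S₁ ⊆ S₂ → nabla S₂ ⊆ S₁ → nabla S₁ = nabla S₂) :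
    ∀ E₁ ∈ {E | ∃ S ∈ 𝕊, nabla S = E}, ∀ E₂ ∈ {E | ∃ S ∈ 𝕊, nabla S = E},
      (E₁ = K ∨ ∃ E ∈ 𝕊, E₁ ∪ E₂ ⊆ E ∧ nabla E = E₁) →
      (E₂ = K ∨ ∃ E ∈ 𝕊, E₂ ∪ E₁ ⊆ E ∧ nabla E = E₂) →
      E₁ = E₂ := by
  rintro E₁ _ E₂ _ (h1 | ⟨F, hF, hsub1, hn1⟩) (h2 | ⟨G, hG, hsub2, hn2⟩)
  · rw [h1, h2]
  · subst h1
    rw [← hn2, hSS2 G hG (le_trans Set.subset_union_right hsub2)]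
  · subst h2
    rw [← hn1, hSS2 F hF (le_trans Set.subset_union_right hsub1)]
  · rw [← hn1, ← hn2]
    apply hSS3 F hF G hG
    · rw [hn1]; exact le_trans Set.subset_union_right hsub2
    · rw [hn2]; exact le_trans Set.subset_union_right hsub1
end
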